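/- Let p, q, r, s be positive integers. Then there exists ε > 0, depending only on p, q, r, s, with the following property. Let η = (η_i^j) (1 ≤ i ≤ p, 1 ≤ j ≤ s) and ζ = (ζ_i^j) (1 ≤ i ≤ q, 1 ≤ j ≤ s) be real weights with |η_i^j| < ε and |ζ_i^j| < ε for all i, j, let A = (A_1, …, A_r) be ℂ-linear maps from ℂ^p to ℂ^q, let F = (F^1, …, F^s) be complete flags in ℂ^p and H = (H^1, …, H^s) complete flags in ℂ^q. Then (A, F, H) is (η, ζ)-semistable if and only if every pair of linear subspaces U ⊆ ℂ^p, V ⊆ ℂ^q with A_j(U) ⊆ V for all j ∈ {1,…,r} and with (U,V) ∉ {({0},{0}), (ℂ^p, ℂ^q)} satisfies: either p·dim V > q·dim U, or p·dim V = q·dim U and q·(|η(U ∩ F)| + |ζ(V ∩ H)|) ≤ (‖η‖ + ‖ζ‖)·dim V. -/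
import Mathlib


open Finset
open Module

/-- The total induced weight `|η(U ∩ F)|` of the weighted flags `(F^j, η^j)` restricted to a
subspace `U`: `Σ_j Σ_{i=1}^p η_i^j·(dim(U ∩ F^j_{i−1}) − dim(U ∩ F^j_i))`. -/
noncomputable def inducedWeight (p s : ℕ) (η : Fin s → ℕ → ℝ)
    (F : Fin s → ℕ → Submodule ℂ (Fin p → ℂ)) (U : Submodule ℂ (Fin p → ℂ)) : ℝ :=
  ∑ j, ∑ i ∈ Finset.Icc 1 p, η j i *
    ((Module.finrank ℂ ↥(U ⊓ F j (i - 1)) : ℝ) - (Module.finrank ℂ ↥(U ⊓ F j i) : ℝ))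

/-- The total weight `‖η‖ = Σ_j Σ_{i=1}^p η_i^j`. -/
noncomputable def totalWeight (p s : ℕ) (η : Fin s → ℕ → ℝ) : ℝ :=
  ∑ j : Fin s, ∑ i ∈ Finset.Icc 1 p, η j i

/-- The quantity `μ_{η,ζ}(U,V)` from the definition of `(η,ζ)`-semistability of a feathered
Kronecker representation. -/
noncomputable def muFeather (p q s : ℕ) (η ζ : Fin s → ℕ → ℝ)
    (F : Fin s → ℕ → Submodule ℂ (Fin p → ℂ)) (H : Fin s → ℕ → Submodule ℂ (Fin q → ℂ))
    (U : Submodule ℂ (Fin p → ℂ)) (V : Submodule ℂ (Fin q → ℂ)) : ℝ :=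
  (totalWeight p s η / p - q) * (Module.finrank ℂ ↥U : ℝ) - inducedWeight p s η F U
    + (totalWeight q s ζ / q + p) * (Module.finrank ℂ ↥V : ℝ) - inducedWeight q s ζ H V

-- telescoping sum lemma
lemma flag_telescope (p : ℕ) (F : ℕ → Submodule ℂ (Fin p → ℂ))
    (hFr : ∀ i ≤ p, Module.finrank ℂ ↥(F i) = p - i)
    (U : Submodule ℂ (Fin p → ℂ)) :
    ∑ i ∈ Finset.Icc 1 p,
      ((Module.finrank ℂ ↥(U ⊓ F (i - 1)) : ℝ) - (Module.finrank ℂ ↥(U ⊓ F i) : ℝ))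
      = Module.finrank ℂ U := by
  have h0 : F 0 = ⊤ := by
    apply Submodule.eq_top_of_finrank_eq
    simp [hFr 0 (Nat.zero_le _), Module.finrank_fin_fun]
  have hpb : F p = ⊥ := by
    have := hFr p le_rfl
    simp only [Nat.sub_self] at this
    exact Submodule.finrank_eq_zero.mp this
  have key : ∑ i ∈ Finset.Icc 1 p,
      ((Module.finrank ℂ ↥(U ⊓ F (i - 1)) : ℝ) - (Module.finrank ℂ ↥(U ⊓ F i) : ℝ))
      = (Module.finrank ℂ ↥(U ⊓ F 0) : ℝ) - (Module.finrank ℂ ↥(U ⊓ F p) : ℝ) := by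
    rw [← Finset.Ico_add_one_right_eq_Icc, Finset.sum_Ico_eq_sum_range]
    have : ∀ i, 1 + i - 1 = i := by omega
    calc ∑ i ∈ Finset.range p,
          ((Module.finrank ℂ ↥(U ⊓ F (1 + i - 1)) : ℝ) - (Module.finrank ℂ ↥(U ⊓ F (1 + i)) : ℝ))
        = ∑ i ∈ Finset.range p,
          ((Module.finrank ℂ ↥(U ⊓ F i) : ℝ) - (Module.finrank ℂ ↥(U ⊓ F (i + 1)) : ℝ)) := by
          refine Finset.sum_congr rfl fun i _ => by rw [this i, add_comm 1 i]
      _ = _ := Finset.sum_range_sub' (fun i => (Module.finrank ℂ ↥(U ⊓ F i) : ℝ)) p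
  rw [key, h0, hpb, inf_top_eq, inf_bot_eq]
  simp

lemma flag_diff_nonneg (p : ℕ) (F : ℕ → Submodule ℂ (Fin p → ℂ))
    (hF : ∀ i < p, F (i + 1) ≤ F i) (U : Submodule ℂ (Fin p → ℂ))
    {i : ℕ} (hi : i ∈ Finset.Icc 1 p) :
    (Module.finrank ℂ ↥(U ⊓ F i) : ℝ) ≤ (Module.finrank ℂ ↥(U ⊓ F (i - 1)) : ℝ) := by
  simp only [Finset.mem_Icc] at hi
  have h1 : F i ≤ F (i - 1) := by
    have := hF (i - 1) (by omega)
    rwa [Nat.sub_add_cancel hi.1] at this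
  exact_mod_cast Submodule.finrank_mono (inf_le_inf_left U h1)

lemma inducedWeight_abs_le (p s : ℕ) (ε : ℝ) (η : Fin s → ℕ → ℝ)
    (hη : ∀ j, ∀ i ∈ Finset.Icc 1 p, |η j i| ≤ ε)
    (F : Fin s → ℕ → Submodule ℂ (Fin p → ℂ))
    (hF : ∀ j, ∀ i < p, F j (i + 1) ≤ F j i)
    (hFr : ∀ j, ∀ i ≤ p, Module.finrank ℂ ↥(F j i) = p - i)
    (U : Submodule ℂ (Fin p → ℂ)) :
    |inducedWeight p s η F U| ≤ ε * s * Module.finrank ℂ U := by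
  unfold inducedWeight
  calc |∑ j, ∑ i ∈ Finset.Icc 1 p, η j i *
        ((Module.finrank ℂ ↥(U ⊓ F j (i - 1)) : ℝ) - (Module.finrank ℂ ↥(U ⊓ F j i) : ℝ))|
      ≤ ∑ j : Fin s, |∑ i ∈ Finset.Icc 1 p, η j i *
        ((Module.finrank ℂ ↥(U ⊓ F j (i - 1)) : ℝ) - (Module.finrank ℂ ↥(U ⊓ F j i) : ℝ))| :=
        Finset.abs_sum_le_sum_abs _ _
    _ ≤ ∑ j : Fin s, ε * Module.finrank ℂ U := by
        refine Finset.sum_le_sum fun j _ => ?_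
        calc |∑ i ∈ Finset.Icc 1 p, η j i *
              ((Module.finrank ℂ ↥(U ⊓ F j (i - 1)) : ℝ) - (Module.finrank ℂ ↥(U ⊓ F j i) : ℝ))|
            ≤ ∑ i ∈ Finset.Icc 1 p, ε *
              ((Module.finrank ℂ ↥(U ⊓ F j (i - 1)) : ℝ) - (Module.finrank ℂ ↥(U ⊓ F j i) : ℝ)) := by
              refine (Finset.abs_sum_le_sum_abs _ _).trans (Finset.sum_le_sum fun i hi => ?_)
              have hd : (0:ℝ) ≤ (Module.finrank ℂ ↥(U ⊓ F j (i - 1)) : ℝ) - (Module.finrank ℂ ↥(U ⊓ F j i) : ℝ) :=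
                sub_nonneg.mpr (flag_diff_nonneg p (F j) (hF j) U hi)
              rw [abs_mul, abs_of_nonneg hd]
              exact mul_le_mul_of_nonneg_right (hη j i hi) hd
          _ = ε * Module.finrank ℂ U := by
              rw [← Finset.mul_sum, flag_telescope p (F j) (hFr j) U]
    _ = ε * s * Module.finrank ℂ U := by
        rw [Finset.sum_const, Finset.card_univ, Fintype.card_fin, nsmul_eq_mul]; ring

lemma inducedWeight_bot (p s : ℕ) (η : Fin s → ℕ → ℝ)
    (F : Fin s → ℕ → Submodule ℂ (Fin p → ℂ)) :
    inducedWeight p s η F ⊥ = 0 := by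
  unfold inducedWeight
  refine Finset.sum_eq_zero fun j _ => Finset.sum_eq_zero fun i _ => ?_
  rw [bot_inf_eq]
  rw [bot_inf_eq]
  simp

lemma inducedWeight_top (p s : ℕ) (η : Fin s → ℕ → ℝ)
    (F : Fin s → ℕ → Submodule ℂ (Fin p → ℂ))
    (hFr : ∀ j, ∀ i ≤ p, Module.finrank ℂ ↥(F j i) = p - i) :
    inducedWeight p s η F ⊤ = totalWeight p s η := by
  unfold inducedWeight totalWeight
  refine Finset.sum_congr rfl fun j _ => Finset.sum_congr rfl fun i hi => ?_
  simp only [Finset.mem_Icc] at hi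
  rw [top_inf_eq, top_inf_eq, hFr j (i-1) (by omega), hFr j i hi.2]
  have h1 : p - (i - 1) = (p - i) + 1 := by omega
  rw [h1]
  push_cast
  ring

lemma totalWeight_abs_le (p s : ℕ) (ε : ℝ) (η : Fin s → ℕ → ℝ)
    (hη : ∀ j, ∀ i ∈ Finset.Icc 1 p, |η j i| ≤ ε) :
    |totalWeight p s η| ≤ ε * s * p := by
  unfold totalWeight
  calc |∑ j : Fin s, ∑ i ∈ Finset.Icc 1 p, η j i|
      ≤ ∑ j : Fin s, ∑ i ∈ Finset.Icc 1 p, |η j i| := by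
        refine (Finset.abs_sum_le_sum_abs _ _).trans (Finset.sum_le_sum fun j _ => Finset.abs_sum_le_sum_abs _ _)
    _ ≤ ∑ j : Fin s, ∑ i ∈ Finset.Icc 1 p, ε :=
        Finset.sum_le_sum fun j _ => Finset.sum_le_sum fun i hi => hη j i hi
    _ = ε * s * p := by
        simp [Nat.card_Icc, mul_comm, Finset.sum_const]
        ring

/-- For small enough weights `(η, ζ)` (depending only on `p, q, r, s`),
a point `(A, F, H)` of the feathered Kronecker space is `(η, ζ)`-semistable if and only if
every nontrivial invariant pair of subspaces `(U, V)` satisfies either `p·dim V > q·dim U`,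
or `p·dim V = q·dim U` together with
`q·(|η(U ∩ F)| + |ζ(V ∩ H)|) ≤ (‖η‖ + ‖ζ‖)·dim V`. -/
theorem feather_semistable_iff_small_weights (p q r s : ℕ)
    (hp : 0 < p) (hq : 0 < q) (hr : 0 < r) (hs : 0 < s) :
    ∃ ε > (0 : ℝ),
      ∀ (η ζ : Fin s → ℕ → ℝ)
        (F : Fin s → ℕ → Submodule ℂ (Fin p → ℂ))
        (H : Fin s → ℕ → Submodule ℂ (Fin q → ℂ))
        (A : Fin r → ((Fin p → ℂ) →ₗ[ℂ] (Fin q → ℂ))),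
        (∀ j, ∀ i ∈ Finset.Icc 1 p, |η j i| < ε) →
        (∀ j, ∀ i ∈ Finset.Icc 1 q, |ζ j i| < ε) →
        (∀ j, ∀ i < p, F j (i + 1) ≤ F j i) →
        (∀ j, ∀ i ≤ p, Module.finrank ℂ ↥(F j i) = p - i) →
        (∀ j, ∀ i < q, H j (i + 1) ≤ H j i) →
        (∀ j, ∀ i ≤ q, Module.finrank ℂ ↥(H j i) = q - i) →
        ((∀ (U : Submodule ℂ (Fin p → ℂ)) (V : Submodule ℂ (Fin q → ℂ)),
            (∀ j, U.map (A j) ≤ V) → 0 ≤ muFeather p q s η ζ F H U V) ↔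
          (∀ (U : Submodule ℂ (Fin p → ℂ)) (V : Submodule ℂ (Fin q → ℂ)),
            (∀ j, U.map (A j) ≤ V) →
            ¬ ((U = ⊥ ∧ V = ⊥) ∨ (U = ⊤ ∧ V = ⊤)) →
            (q * Module.finrank ℂ U < p * Module.finrank ℂ V ∨
              (q * Module.finrank ℂ U = p * Module.finrank ℂ V ∧
                (q : ℝ) * (inducedWeight p s η F U + inducedWeight q s ζ H V)
                  ≤ (totalWeight p s η + totalWeight q s ζ) *
                      (Module.finrank ℂ ↥V : ℝ))))) := by
  have hp' : (0:ℝ) < p := by exact_mod_cast hp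
  have hq' : (0:ℝ) < q := by exact_mod_cast hq
  have hs' : (0:ℝ) < s := by exact_mod_cast hs
  refine ⟨1 / (4 * s * (p + q)), by positivity, ?_⟩
  set ε : ℝ := 1 / (4 * s * (p + q)) with hεdef
  have hεpos : (0:ℝ) < ε := by positivity
  intro η ζ F H A hη hζ hF hFr hH hHr
  have hη' : ∀ j, ∀ i ∈ Finset.Icc 1 p, |η j i| ≤ ε := fun j i hi => (hη j i hi).le
  have hζ' : ∀ j, ∀ i ∈ Finset.Icc 1 q, |ζ j i| ≤ ε := fun j i hi => (hζ j i hi).le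
  -- dimension bounds
  have hule : ∀ (U : Submodule ℂ (Fin p → ℂ)), (Module.finrank ℂ U : ℝ) ≤ p := by
    intro U
    have := U.finrank_le
    rw [Module.finrank_fin_fun] at this
    exact_mod_cast this
  have hvle : ∀ (V : Submodule ℂ (Fin q → ℂ)), (Module.finrank ℂ V : ℝ) ≤ q := by
    intro V
    have := V.finrank_le
    rw [Module.finrank_fin_fun] at this
    exact_mod_cast this
  have htη : |totalWeight p s η| ≤ ε * s * p := totalWeight_abs_le p s ε η hη'
  have htζ : |totalWeight q s ζ| ≤ ε * s * q := totalWeight_abs_le q s ε ζ hζ'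
  have hIη : ∀ U, |inducedWeight p s η F U| ≤ ε * s * p := fun U =>
    (inducedWeight_abs_le p s ε η hη' F hF hFr U).trans
      (mul_le_mul_of_nonneg_left (hule U) (by positivity))
  have hIζ : ∀ V, |inducedWeight q s ζ H V| ≤ ε * s * q := fun V =>
    (inducedWeight_abs_le q s ε ζ hζ' H hH hHr V).trans
      (mul_le_mul_of_nonneg_left (hvle V) (by positivity))
  -- the key decomposition of μ
  have key : ∀ (U : Submodule ℂ (Fin p → ℂ)) (V : Submodule ℂ (Fin q → ℂ)),
      muFeather p q s η ζ F H U V =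
        ((p:ℝ) * Module.finrank ℂ V - q * Module.finrank ℂ U) +
          (totalWeight p s η * Module.finrank ℂ U / p - inducedWeight p s η F U +
            totalWeight q s ζ * Module.finrank ℂ V / q - inducedWeight q s ζ H V) := by
    intro U V
    unfold muFeather
    ring
  -- the error term is at most 1/2
  have hEb : ∀ (U : Submodule ℂ (Fin p → ℂ)) (V : Submodule ℂ (Fin q → ℂ)),
      |totalWeight p s η * Module.finrank ℂ U / p - inducedWeight p s η F U +
        totalWeight q s ζ * Module.finrank ℂ V / q - inducedWeight q s ζ H V| ≤ 1/2 := by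
    intro U V
    have h1 : |totalWeight p s η * Module.finrank ℂ U / p| ≤ ε * s * p := by
      rw [abs_div, abs_mul, abs_of_nonneg (by positivity : (0:ℝ) ≤ (Module.finrank ℂ U : ℝ)),
        abs_of_pos hp', div_le_iff₀ hp']
      exact mul_le_mul htη (hule U) (by positivity) (by positivity)
    have h3 : |totalWeight q s ζ * Module.finrank ℂ V / q| ≤ ε * s * q := by
      rw [abs_div, abs_mul, abs_of_nonneg (by positivity : (0:ℝ) ≤ (Module.finrank ℂ V : ℝ)),
        abs_of_pos hq', div_le_iff₀ hq']
      exact mul_le_mul htζ (hvle V) (by positivity) (by positivity)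
    have h2 := hIη U
    have h4 := hIζ V
    have hhalf : ε * s * p + ε * s * p + (ε * s * q + ε * s * q) = 1/2 := by
      rw [hεdef]
      have hpq : (0:ℝ) < (p:ℝ) + q := by positivity
      field_simp
      ring
    rw [abs_le] at h1 h2 h3 h4 ⊢
    constructor <;> [linarith; linarith]
  constructor
  · -- forward direction
    intro hss U V hUV _
    have hmu := hss U V hUV
    rw [key U V] at hmu
    have hE := abs_le.mp (hEb U V)
    -- q * u ≤ p * v in ℕ
    have hle : q * Module.finrank ℂ U ≤ p * Module.finrank ℂ V := by
      have hr1 : ((q * Module.finrank ℂ U : ℕ) : ℝ) < ((p * Module.finrank ℂ V : ℕ) : ℝ) + 1 := by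
        push_cast
        linarith
      have := Nat.cast_lt (α := ℝ) |>.mp (by exact_mod_cast hr1 : ((q * Module.finrank ℂ U : ℕ) : ℝ) < ((p * Module.finrank ℂ V + 1 : ℕ) : ℝ))
      omega
    rcases lt_or_eq_of_le hle with hlt | heq
    · exact Or.inl hlt
    · refine Or.inr ⟨heq, ?_⟩
      have hc : (q:ℝ) * Module.finrank ℂ U = (p:ℝ) * Module.finrank ℂ V := by
        exact_mod_cast heq
      have h6 : totalWeight p s η * Module.finrank ℂ U / p =
          totalWeight p s η * Module.finrank ℂ V / q := by
        field_simp
        linear_combination (totalWeight p s η) * hc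
      rw [h6] at hmu
      have h5 : inducedWeight p s η F U + inducedWeight q s ζ H V ≤
          (totalWeight p s η + totalWeight q s ζ) * Module.finrank ℂ V / q := by
        have : ((p:ℝ) * Module.finrank ℂ V - q * Module.finrank ℂ U) = 0 := by linarith
        rw [this, zero_add] at hmu
        have h7 : totalWeight p s η * Module.finrank ℂ V / q +
            totalWeight q s ζ * Module.finrank ℂ V / q =
            (totalWeight p s η + totalWeight q s ζ) * Module.finrank ℂ V / q := by ring
        linarith
      calc (q:ℝ) * (inducedWeight p s η F U + inducedWeight q s ζ H V)
          ≤ q * ((totalWeight p s η + totalWeight q s ζ) * Module.finrank ℂ V / q) :=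
            mul_le_mul_of_nonneg_left h5 hq'.le
        _ = (totalWeight p s η + totalWeight q s ζ) * Module.finrank ℂ V := by
            field_simp
  · -- backward direction
    intro hcond U V hUV
    by_cases htriv : (U = ⊥ ∧ V = ⊥) ∨ (U = ⊤ ∧ V = ⊤)
    · rcases htriv with ⟨hU, hV⟩ | ⟨hU, hV⟩
      · subst hU; subst hV
        unfold muFeather
        rw [inducedWeight_bot, inducedWeight_bot, finrank_bot]
        simp
      · subst hU; subst hV
        rw [key]
        rw [inducedWeight_top p s η F hFr, inducedWeight_top q s ζ H hHr]
        have hu : (Module.finrank ℂ (⊤ : Submodule ℂ (Fin p → ℂ)) : ℝ) = p := by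
          rw [finrank_top, Module.finrank_fin_fun]
        have hv : (Module.finrank ℂ (⊤ : Submodule ℂ (Fin q → ℂ)) : ℝ) = q := by
          rw [finrank_top, Module.finrank_fin_fun]
        rw [hu, hv]
        have e1 : totalWeight p s η * (p:ℝ) / p = totalWeight p s η := by
          field_simp
        have e2 : totalWeight q s ζ * (q:ℝ) / q = totalWeight q s ζ := by
          field_simp
        rw [e1, e2]
        ring_nf
        linarith [le_refl (0:ℝ)]
    · have h := hcond U V hUV htriv
      have hE := abs_le.mp (hEb U V)
      rw [key U V]
      rcases h with hlt | ⟨heq, hw⟩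
      · have h1 : (1:ℝ) ≤ (p:ℝ) * Module.finrank ℂ V - q * Module.finrank ℂ U := by
          have : q * Module.finrank ℂ U + 1 ≤ p * Module.finrank ℂ V := hlt
          have := (Nat.cast_le (α := ℝ)).mpr this
          push_cast at this
          linarith
        linarith
      · have hc : (q:ℝ) * Module.finrank ℂ U = (p:ℝ) * Module.finrank ℂ V := by
          exact_mod_cast heq
        have h6 : totalWeight p s η * Module.finrank ℂ U / p =
            totalWeight p s η * Module.finrank ℂ V / q := by
          field_simp
          linear_combination (totalWeight p s η) * hc
        rw [h6]
        have h5 : inducedWeight p s η F U + inducedWeight q s ζ H V ≤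
            (totalWeight p s η + totalWeight q s ζ) * Module.finrank ℂ V / q := by
          rw [le_div_iff₀ hq']
          linarith
        have h7 : totalWeight p s η * Module.finrank ℂ V / q +
            totalWeight q s ζ * Module.finrank ℂ V / q =
            (totalWeight p s η + totalWeight q s ζ) * Module.finrank ℂ V / q := by ring
        linarith
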